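/- Let p ≥ 1 and let ℓ = [-1/p, 0]. Suppose s₁,...,s_{n-1} are positive integers and t₁,...,t_{n-2} are positive integers together with t_{n-1} = 0 such that p_k(s) = p_k(t₁,...,t_{n-2},0) for 1 ≤ k ≤ n-2. Define f(k) = (∏ᵢ(sᵢk+1) - ∏ⱼ(tⱼk+1))·ehr_ℓ(k). Then f(k) = s₁⋯s_{n-1} k^{n-1} ehr_ℓ(k), and f is a quasi-polynomial whose coefficient functions are all constant except the coefficient of k^{n-1}, which has minimum period exactly p (modulo addition of polynomials). -/

import Mathlib

open Finset MvPolynomial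

lemma aux_newton {N : ℕ} (v : Fin N → ℚ) (k : ℕ) :
    (k : ℚ) * aeval v (esymm (Fin N) ℚ k) =
      (-1)^(k+1) * ∑ a ∈ (Finset.HasAntidiagonal.antidiagonal k).filter (fun a => a.1 < k),
        (-1)^a.1 * aeval v (esymm (Fin N) ℚ a.1) * ∑ i, v i ^ a.2 := by
  have h := congrArg (aeval v) (MvPolynomial.mul_esymm_eq_sum (Fin N) ℚ k)
  simpa [map_sum, psum, map_mul, map_pow] using h

lemma aux_esymm_eq {N : ℕ} (x y : Fin N → ℚ) (r : ℕ)
    (hpow : ∀ k, 1 ≤ k → k ≤ r → ∑ i, x i ^ k = ∑ i, y i ^ k) :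
    ∀ k, k ≤ r → aeval x (esymm (Fin N) ℚ k) = aeval y (esymm (Fin N) ℚ k) := by
  intro k
  induction k using Nat.strong_induction_on with
  | _ k ih =>
    intro hk
    rcases Nat.eq_zero_or_pos k with h0 | h0
    · subst h0; simp
    · have h1 := aux_newton x k
      have h2 := aux_newton y k
      have hsum : ∑ a ∈ (Finset.HasAntidiagonal.antidiagonal k).filter (fun a => a.1 < k),
            (-1:ℚ)^a.1 * aeval x (esymm (Fin N) ℚ a.1) * ∑ i, x i ^ a.2
          = ∑ a ∈ (Finset.HasAntidiagonal.antidiagonal k).filter (fun a => a.1 < k),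
            (-1:ℚ)^a.1 * aeval y (esymm (Fin N) ℚ a.1) * ∑ i, y i ^ a.2 := by
        refine Finset.sum_congr rfl ?_
        intro a ha
        simp only [Finset.mem_filter, Finset.HasAntidiagonal.mem_antidiagonal] at ha
        rw [ih a.1 ha.2 (by omega), hpow a.2 (by omega) (by omega)]
      have hkne : (k : ℚ) ≠ 0 := by positivity
      apply mul_left_cancel₀ hkne
      rw [h1, h2, hsum]

lemma aux_prod_expand {N : ℕ} (v : Fin N → ℚ) (c : ℚ) (hc : c ≠ 0) :
    ∏ i, (v i * c + 1) =
      ∑ j ∈ Finset.range (N+1), aeval v (esymm (Fin N) ℚ j) * c ^ j := by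
  set S : Multiset ℚ := Multiset.map v Finset.univ.val with hS
  have hcard : Multiset.card S = N := by simp [hS]
  have hpoly := congrArg (Polynomial.eval c⁻¹) (Multiset.prod_X_add_C_eq_sum_esymm S)
  rw [Polynomial.eval_multiset_prod, Multiset.map_map] at hpoly
  simp only [Function.comp, Polynomial.eval_add, Polynomial.eval_X, Polynomial.eval_C,
    Polynomial.eval_finset_sum, Polynomial.eval_mul, Polynomial.eval_pow, hcard] at hpoly
  have key : ∏ i, (v i * c + 1) = c ^ N * (Multiset.map (fun r => c⁻¹ + r) S).prod := by
    rw [hS, Multiset.map_map]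
    have : ∀ i : Fin N, v i * c + 1 = c * (c⁻¹ + v i) := by
      intro i; field_simp; ring
    rw [Finset.prod_congr rfl (fun i _ => this i), Finset.prod_mul_distrib]
    simp [Finset.prod_eq_multiset_prod, Function.comp]
  rw [key, hpoly, Finset.mul_sum]
  refine Finset.sum_congr rfl ?_
  intro j hj
  rw [Finset.mem_range] at hj
  have hjN : j ≤ N := by omega
  rw [aeval_esymm_eq_multiset_esymm]
  have : c ^ N * c⁻¹ ^ (N - j) = c ^ j := by
    rw [inv_pow, ← Nat.sub_add_cancel hjN, pow_add]
    field_simp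
    rw [Nat.add_sub_cancel]
  rw [← hS, ← this]
  ring

lemma aux_esymm_top {N : ℕ} (v : Fin N → ℚ) :
    aeval v (esymm (Fin N) ℚ N) = ∏ i, v i := by
  rw [aeval_esymm_eq_multiset_esymm, Finset.esymm_map_val]
  have h : Finset.powersetCard N (Finset.univ : Finset (Fin N)) = {Finset.univ} := by
    simpa using Finset.powersetCard_self (Finset.univ : Finset (Fin N))
  rw [h]; simp

lemma aux_key {m : ℕ} (x y : Fin (m+1) → ℚ)
    (hpow : ∀ k, 1 ≤ k → k ≤ m → ∑ i, x i ^ k = ∑ i, y i ^ k)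
    (hy : ∏ i, y i = 0) (c : ℚ) (hc : c ≠ 0) :
    (∏ i, (x i * c + 1)) - ∏ i, (y i * c + 1) = (∏ i, x i) * c ^ (m+1) := by
  rw [aux_prod_expand x c hc, aux_prod_expand y c hc,
    Finset.sum_range_succ (fun j => aeval x (esymm (Fin (m+1)) ℚ j) * c ^ j) (m+1),
    Finset.sum_range_succ (fun j => aeval y (esymm (Fin (m+1)) ℚ j) * c ^ j) (m+1)]
  have hEq : ∑ j ∈ Finset.range (m+1), aeval x (esymm (Fin (m+1)) ℚ j) * c ^ j
      = ∑ j ∈ Finset.range (m+1), aeval y (esymm (Fin (m+1)) ℚ j) * c ^ j := by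
    refine Finset.sum_congr rfl fun j hj => ?_
    rw [Finset.mem_range] at hj
    rw [aux_esymm_eq x y m hpow j (by omega)]
  rw [hEq, aux_esymm_top, aux_esymm_top, hy]
  ring

/-- `ehr_ℓ(k) = ⌊k/p⌋ + 1`, the lattice point count of the `k`-th dilate of `[-1/p, 0]`. -/
def ehrSeg (p k : ℕ) : ℚ := ((k / p : ℕ) : ℚ) + 1

/-- The constant-term coefficient function of `ehr_ℓ`:  `c₀(k) = ehr_ℓ(k) - k/p`. -/
def c₀ (p k : ℕ) : ℚ := ehrSeg p k - (k : ℚ) / p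

theorem stmt14 (p : ℕ) (hp : 0 < p) (n : ℕ) (hn : 2 ≤ n)
    (s : Fin (n - 1) → ℤ) (t : Fin (n - 2) → ℤ)
    (hs : ∀ i, 0 < s i) (ht : ∀ j, 0 < t j)
    (hpow : ∀ k : ℕ, 1 ≤ k → k ≤ n - 2 → ∑ i, (s i) ^ k = ∑ j, (t j) ^ k)
    (f : ℕ → ℚ)
    (hf : ∀ k : ℕ, f k =
      ((∏ i, ((s i : ℚ) * k + 1)) - ∏ j, ((t j : ℚ) * k + 1)) * ehrSeg p k) :
    (∀ k : ℕ, f k = (∏ i, (s i : ℚ)) * (k : ℚ) ^ (n - 1) * ehrSeg p k) ∧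
    (∃ P : Polynomial ℚ, ∀ k : ℕ,
      f k = (∏ i, (s i : ℚ)) * c₀ p k * (k : ℚ) ^ (n - 1) + P.eval (k : ℚ)) ∧
    (∀ k : ℕ, (∏ i, (s i : ℚ)) * c₀ p (k + p) = (∏ i, (s i : ℚ)) * c₀ p k) ∧
    (∀ d : ℕ, 0 < d →
      (∀ k : ℕ, (∏ i, (s i : ℚ)) * c₀ p (k + d) = (∏ i, (s i : ℚ)) * c₀ p k) → p ≤ d) := by
  obtain ⟨m, rfl⟩ : ∃ m, n = m + 2 := ⟨n - 2, by omega⟩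
  have hp0 : (p : ℚ) ≠ 0 := Nat.cast_ne_zero.mpr (by omega)
  have hs' : ∀ i : Fin (m + 1), 0 < s i := hs
  have hf' : ∀ k : ℕ, f k = ((∏ i : Fin (m + 1), ((s i : ℚ) * k + 1))
      - ∏ j : Fin m, ((t j : ℚ) * k + 1)) * ehrSeg p k := hf
  have hpow' : ∀ k : ℕ, 1 ≤ k → k ≤ m →
      (∑ i : Fin (m + 1), (s i) ^ k) = ∑ j : Fin m, (t j) ^ k := hpow
  -- the key polynomial identity
  have key : ∀ k : ℕ, (∏ i : Fin (m + 1), ((s i : ℚ) * k + 1))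
      - (∏ j : Fin m, ((t j : ℚ) * k + 1))
      = (∏ i : Fin (m + 1), (s i : ℚ)) * (k : ℚ) ^ (m + 1) := by
    intro k
    rcases Nat.eq_zero_or_pos k with rfl | hk
    · simp
    · set y : Fin (m + 1) → ℚ := Fin.snoc (fun j : Fin m => (t j : ℚ)) 0 with hy
      have h1 : ∏ j : Fin m, ((t j : ℚ) * k + 1) = ∏ i : Fin (m + 1), (y i * k + 1) := by
        rw [Fin.prod_univ_castSucc]
        simp [hy]
      have h2 : ∀ kk : ℕ, 1 ≤ kk → kk ≤ m →
          ∑ i : Fin (m + 1), (s i : ℚ) ^ kk = ∑ i : Fin (m + 1), y i ^ kk := by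
        intro kk h1k h2k
        have hh := hpow' kk h1k h2k
        have hys : ∑ i : Fin (m + 1), y i ^ kk = ∑ j : Fin m, (t j : ℚ) ^ kk := by
          rw [Fin.sum_univ_castSucc]
          simp [hy, zero_pow (by omega : kk ≠ 0)]
        rw [hys]
        exact_mod_cast congrArg (Int.cast : ℤ → ℚ) hh
      have h3 : ∏ i : Fin (m + 1), y i = 0 := by
        rw [Fin.prod_univ_castSucc]; simp [hy]
      rw [h1]
      exact aux_key (fun i => (s i : ℚ)) y h2 h3 (k : ℚ)
        (Nat.cast_ne_zero.mpr (by omega))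
  have part1 : ∀ k : ℕ, f k = (∏ i : Fin (m + 1), (s i : ℚ)) * (k : ℚ) ^ (m + 1)
      * ehrSeg p k := by
    intro k; rw [hf' k, key k]
  refine ⟨part1, ?_, ?_, ?_⟩
  · -- part 2
    refine ⟨Polynomial.C ((∏ i : Fin (m + 1), (s i : ℚ)) / p) * Polynomial.X ^ (m + 2), ?_⟩
    intro k
    have he : ehrSeg p k = c₀ p k + (k : ℚ) / p := by unfold c₀; ring
    rw [part1 k, he]
    simp only [Polynomial.eval_mul, Polynomial.eval_pow, Polynomial.eval_C, Polynomial.eval_X]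
    field_simp
    rw [show (k : ℚ) ^ (m + 2 - 1) = (k : ℚ) ^ (m + 1) by rfl]
    rw [show (∏ i : Fin (m + 2 - 1), (s i : ℚ)) = ∏ i : Fin (m + 1), (s i : ℚ) from rfl]
    ring
  · -- part 3
    intro k
    have hc : c₀ p (k + p) = c₀ p k := by
      unfold c₀ ehrSeg
      rw [Nat.add_div_right k hp]
      push_cast
      field_simp
      ring
    rw [hc]
  · -- part 4
    intro d hd hper
    by_contra hcon
    push_neg at hcon
    have hsne : (∏ i : Fin (m + 1), (s i : ℚ)) ≠ 0 := by
      apply Finset.prod_ne_zero_iff.mpr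
      intro i _
      exact_mod_cast (hs' i).ne'
    have hper' : ∀ k : ℕ, (∏ i : Fin (m + 1), (s i : ℚ)) * c₀ p (k + d)
        = (∏ i : Fin (m + 1), (s i : ℚ)) * c₀ p k := hper
    have hpd := hper' (p - d)
    rw [Nat.sub_add_cancel (le_of_lt hcon)] at hpd
    have hc2 : c₀ p p = c₀ p (p - d) := mul_left_cancel₀ hsne hpd
    have e1 : c₀ p p = 1 := by
      unfold c₀ ehrSeg
      rw [Nat.div_self hp, div_self hp0]
      norm_num
    have e2 : c₀ p (p - d) = 1 - ((p : ℚ) - d) / p := by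
      unfold c₀ ehrSeg
      rw [Nat.div_eq_of_lt (by omega)]
      rw [Nat.cast_sub (le_of_lt hcon)]
      norm_num
    rw [e1, e2] at hc2
    have h0 : ((p : ℚ) - d) / p = 0 := by linarith
    have h1 : (p : ℚ) - d = 0 := by
      field_simp at h0
      linarith
    have : (p : ℚ) = d := by linarith
    have : p = d := by exact_mod_cast this
    omega
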